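/- Let a ∈ (0,∞)^d, b ∈ [0,∞)^d, c ∈ (0,∞)^d satisfy ∑_{i=1}^d (a_i² + b_i²)/c_i − ∑_{i≠j} (a_i b_j − a_j b_i)²/(c_i c_j) > 1. Then the symmetric matrix D = a aᵀ + b bᵀ − diag(c) has exactly one positive eigenvalue. -/

import Mathlib

open Matrix Finset RealInnerProductSpace


lemma dot_sum_smul {d : ℕ} (y : Fin d → ℝ) (f : Fin d → ℝ) (g : Fin d → Fin d → ℝ) :
    y ⬝ᵥ (∑ i, f i • g i) = ∑ i, f i * (y ⬝ᵥ g i) := by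
  simp [dotProduct, Finset.mul_sum, Finset.sum_apply]
  rw [Finset.sum_comm]
  apply Finset.sum_congr rfl; intros; apply Finset.sum_congr rfl; intros; ring

lemma mulVec_sum_smul {d : ℕ} (D : Matrix (Fin d) (Fin d) ℝ) (f : Fin d → ℝ) (g : Fin d → Fin d → ℝ) :
    D *ᵥ (∑ i, f i • g i) = ∑ i, f i • (D *ᵥ g i) := by
  simp [Matrix.mulVec_sum, Matrix.mulVec_smul]

lemma quad_expansion {d : ℕ} (D : Matrix (Fin d) (Fin d) ℝ) (hD : D.IsHermitian) (x : Fin d → ℝ) :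
    x ⬝ᵥ D *ᵥ x = ∑ i, hD.eigenvalues i * ((hD.eigenvectorBasis i : Fin d → ℝ) ⬝ᵥ x)^2 := by
  set v : Fin d → Fin d → ℝ := fun i => (hD.eigenvectorBasis i : Fin d → ℝ) with hv
  set r : Fin d → ℝ := fun i => v i ⬝ᵥ x with hr
  have h2 : ∀ i, ⟪hD.eigenvectorBasis i, (WithLp.toLp 2 x : EuclideanSpace ℝ (Fin d))⟫ = r i := by
    intro i; simp [PiLp.inner_apply, dotProduct, hr, hv, mul_comm]
  have h1 : x = ∑ i, r i • v i := by
    have := hD.eigenvectorBasis.sum_repr' (WithLp.toLp 2 x : EuclideanSpace ℝ (Fin d))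
    simp_rw [h2] at this
    have := congrArg (fun z : EuclideanSpace ℝ (Fin d) => (z : Fin d → ℝ)) this
    simpa using this.symm
  have horth : ∀ i j, v i ⬝ᵥ v j = if i = j then 1 else 0 := by
    intro i j
    have := orthonormal_iff_ite.mp hD.eigenvectorBasis.orthonormal i j
    rw [real_inner_comm] at this
    simpa [PiLp.inner_apply, dotProduct, hv] using this
  conv_lhs => rw [h1, mulVec_sum_smul]
  have hmv : ∀ i, D *ᵥ v i = hD.eigenvalues i • v i := fun i => hD.mulVec_eigenvectorBasis i
  simp_rw [hmv, smul_smul]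
  rw [dot_sum_smul]
  apply Finset.sum_congr rfl
  intro i _
  rw [dotProduct_comm _ (v i), dot_sum_smul]
  have hcol : (∑ j, r j * (v i ⬝ᵥ v j)) = r i := by
    simp_rw [horth]; simp
  rw [hcol]
  simp only [hr, hv]
  ring

lemma quad_eq {d : ℕ} (a b c x : Fin d → ℝ) :
    x ⬝ᵥ (Matrix.vecMulVec a a + Matrix.vecMulVec b b - Matrix.diagonal c) *ᵥ x
      = (a ⬝ᵥ x)^2 + (b ⬝ᵥ x)^2 - ∑ i, c i * x i ^ 2 := by
  have hmv : ∀ i, ((Matrix.vecMulVec a a + Matrix.vecMulVec b b - Matrix.diagonal c) *ᵥ x) i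
      = a i * (a ⬝ᵥ x) + b i * (b ⬝ᵥ x) - c i * x i := by
    intro i
    simp only [Matrix.mulVec, dotProduct, Matrix.sub_apply, Matrix.add_apply,
      Matrix.vecMulVec_apply, Matrix.diagonal_apply]
    rw [show ∑ j, (a i * a j + b i * b j - (if i = j then c i else 0)) * x j
        = (∑ j, a i * (a j * x j)) + ((∑ j, b i * (b j * x j))
            - ∑ j, (if i = j then c i else 0) * x j) by
      rw [← Finset.sum_sub_distrib, ← Finset.sum_add_distrib]
      exact Finset.sum_congr rfl fun j _ => by ring]
    rw [show (∑ j, (if i = j then c i else 0) * x j) = c i * x i by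
      simp [ite_mul, Finset.sum_ite_eq]]
    rw [← Finset.mul_sum, ← Finset.mul_sum]
    ring
  simp only [dotProduct, hmv]
  have : ∀ i ∈ univ, x i * (a i * (∑ j, a j * x j) + b i * (∑ j, b j * x j) - c i * x i)
      = (a i * x i) * (∑ j, a j * x j) + (b i * x i) * (∑ j, b j * x j) - c i * x i ^ 2 :=
    fun i _ => by ring
  rw [Finset.sum_congr rfl this, Finset.sum_sub_distrib, Finset.sum_add_distrib,
    ← Finset.sum_mul, ← Finset.sum_mul]
  ring

lemma sum_identity {d : ℕ} (a b c : Fin d → ℝ) (hc : ∀ i, 0 < c i) :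
    (∑ i, ∑ j, if i = j then 0 else (a i * b j - a j * b i) ^ 2 / (c i * c j))
      = 2 * ((∑ i, a i^2 / c i) * (∑ i, b i^2 / c i) - (∑ i, a i * b i / c i)^2) := by
  have key : ∀ i j : Fin d, (if i = j then 0 else (a i * b j - a j * b i) ^ 2 / (c i * c j))
      = (a i^2/c i) * (b j^2/c j) + (a j^2/c j) * (b i^2/c i)
        - 2 * ((a i * b i / c i) * (a j * b j / c j)) := by
    intro i j
    have hci := (hc i).ne'
    have hcj := (hc j).ne'
    rcases eq_or_ne i j with rfl | h
    · simp; field_simp; ring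
    · rw [if_neg h]; field_simp; ring
  simp_rw [key]
  have split : ∑ i, ∑ j, ((a i^2/c i) * (b j^2/c j) + (a j^2/c j) * (b i^2/c i)
        - 2 * ((a i * b i / c i) * (a j * b j / c j)))
      = (∑ i, ∑ j, (a i^2/c i) * (b j^2/c j)) + (∑ i, ∑ j, (a j^2/c j) * (b i^2/c i))
        - ∑ i, ∑ j, 2 * ((a i * b i / c i) * (a j * b j / c j)) := by
    simp_rw [Finset.sum_sub_distrib, Finset.sum_add_distrib]
  rw [split]
  have comm : (∑ i, ∑ j, (a j^2/c j) * (b i^2/c i)) = ∑ j, ∑ i, (a j^2/c j) * (b i^2/c i) :=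
    Finset.sum_comm
  rw [comm, ← Finset.sum_mul_sum]
  have : (∑ i, ∑ j, 2 * ((a i * b i / c i) * (a j * b j / c j)))
      = 2 * ((∑ i, a i * b i / c i) * (∑ j, a j * b j / c j)) := by
    rw [Finset.sum_mul_sum, Finset.mul_sum]
    exact Finset.sum_congr rfl fun i _ => by rw [Finset.mul_sum]
  rw [this]
  ring

lemma witness_exists (A B T : ℝ) (hp : 0 ≤ A*B - T^2) (hs : 1 < A + B - 2*(A*B - T^2)) :
    ∃ α β : ℝ, 0 < (α*A+β*T)^2 + (α*T+β*B)^2 - (α^2*A + 2*α*β*T + β^2*B) := by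
  set M11 := A^2+T^2-A with hM11
  set M22 := T^2+B^2-B with hM22
  set M12 := A*T+T*B-T with hM12
  have hF : ∀ α β : ℝ, (α*A+β*T)^2 + (α*T+β*B)^2 - (α^2*A + 2*α*β*T + β^2*B)
      = M11*α^2 + 2*M12*α*β + M22*β^2 := by intro α β; rw [hM11, hM22, hM12]; ring
  by_cases h1 : 0 < M11
  · exact ⟨1, 0, by rw [hF]; nlinarith⟩
  by_cases h2 : 0 < M22
  · exact ⟨0, 1, by rw [hF]; nlinarith⟩
  push_neg at h1 h2
  rcases eq_or_lt_of_le hp with hp0 | hp0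
  · -- p = 0 : trace positive, contradiction
    exfalso
    have htr : 0 < M11 + M22 := by nlinarith [sq_nonneg (A+B)]
    linarith
  · -- p > 0 : det < 0
    have hdet : M11*M22 - M12^2 = (A*B-T^2)*((A*B-T^2)+1-(A+B)) := by
      rw [hM11, hM22, hM12]; ring
    have hdetneg : M11*M22 - M12^2 < 0 := by nlinarith
    rcases eq_or_lt_of_le h1 with h10 | h1neg
    · -- M11 = 0, M12 ≠ 0
      have hM12ne : M12 ≠ 0 := by
        intro h; rw [← h10, h] at hdetneg; simp at hdetneg; nlinarith
      refine ⟨(1-M22)/(2*M12), 1, ?_⟩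
      have hv : (0:ℝ)*((1-M22)/(2*M12))^2 + 2*M12*((1-M22)/(2*M12))*1 + M22*1^2 = 1 := by
        field_simp; ring
      rw [hF, h10, hv]
      exact one_pos
    · refine ⟨-M12, M11, ?_⟩
      rw [hF]
      have : M11*(-M12)^2 + 2*M12*(-M12)*M11 + M22*M11^2 = M11*(M11*M22 - M12^2) := by ring
      rw [this]
      nlinarith

lemma weighted_cs {d : ℕ} (c f g : Fin d → ℝ) (hc : ∀ i, 0 ≤ c i) :
    (∑ i, c i * (f i * g i))^2 ≤ (∑ i, c i * f i^2) * (∑ i, c i * g i^2) := by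
  have h := Finset.sum_mul_sq_le_sq_mul_sq Finset.univ
    (fun i => Real.sqrt (c i) * f i) (fun i => Real.sqrt (c i) * g i)
  have e1 : ∀ i : Fin d, (Real.sqrt (c i) * f i) * (Real.sqrt (c i) * g i)
      = c i * (f i * g i) := by
    intro i
    have : Real.sqrt (c i) * Real.sqrt (c i) = c i := Real.mul_self_sqrt (hc i)
    linear_combination (f i * g i) * this
  have e2 : ∀ i : Fin d, (Real.sqrt (c i) * f i)^2 = c i * f i^2 := by
    intro i
    rw [mul_pow, Real.sq_sqrt (hc i)]
  have e3 : ∀ i : Fin d, (Real.sqrt (c i) * g i)^2 = c i * g i^2 := by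
    intro i
    rw [mul_pow, Real.sq_sqrt (hc i)]
  simp_rw [e1, e2, e3] at h
  exact h

lemma key_step {d : ℕ} (a b c xx : Fin d → ℝ) (hc : ∀ i, 0 < c i)
    (hB : 0 < ∑ i, b i^2/c i)
    (hax : a ⬝ᵥ xx = 1) (hbx : b ⬝ᵥ xx = 0) (hS : ∑ i, c i * xx i^2 ≤ 1) :
    (∑ i, b i^2/c i) ≤ (∑ i, a i^2/c i)*(∑ i, b i^2/c i) - (∑ i, a i * b i/c i)^2 := by
  set A := ∑ i, a i^2/c i with hA
  set B := ∑ i, b i^2/c i with hBdef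
  set T := ∑ i, a i * b i/c i with hT
  have hBne : B ≠ 0 := hB.ne'
  set g : Fin d → ℝ := fun k => a k / c k - (T/B) * (b k / c k) with hg
  have h1 : ∑ k, c k * (g k * xx k) = 1 := by
    have : ∀ k : Fin d, c k * (g k * xx k) = a k * xx k - (T/B) * (b k * xx k) := by
      intro k
      have := (hc k).ne'
      rw [hg]; field_simp
    rw [Finset.sum_congr rfl fun k _ => this k, Finset.sum_sub_distrib, ← Finset.mul_sum]
    have ea : ∑ k, a k * xx k = 1 := hax
    have eb : ∑ k, b k * xx k = 0 := hbx
    rw [ea, eb]; ring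
  have h2 : ∑ k, c k * g k^2 = A - 2*(T/B)*T + (T/B)^2 * B := by
    have : ∀ k : Fin d, c k * g k^2
        = a k^2 / c k - 2*(T/B) * (a k * b k / c k) + (T/B)^2 * (b k^2 / c k) := by
      intro k
      have := (hc k).ne'
      rw [hg]; field_simp; ring
    rw [Finset.sum_congr rfl fun k _ => this k, Finset.sum_add_distrib, Finset.sum_sub_distrib,
      ← Finset.mul_sum, ← Finset.mul_sum]
  have hcs := weighted_cs c g xx (fun i => (hc i).le)
  rw [h1, h2] at hcs
  have hSnn : 0 ≤ ∑ i, c i * xx i^2 :=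
    Finset.sum_nonneg fun i _ => mul_nonneg (hc i).le (sq_nonneg _)
  have hE : A - 2*(T/B)*T + (T/B)^2 * B = A - T^2/B := by field_simp; ring
  rw [hE] at hcs
  norm_num at hcs
  have hP : 1 ≤ A - T^2/B := by
    rcases le_or_gt (A - T^2/B) 0 with h | h
    · nlinarith
    · have := mul_le_mul_of_nonneg_left hS h.le
      linarith
  have hBP : B * (A - T^2/B) = A*B - T^2 := by field_simp
  nlinarith

set_option maxHeartbeats 1000000

theorem unique_positive_eigenvalue_rank_two {d : ℕ} (a b c : Fin d → ℝ)
    (ha : ∀ i, 0 < a i) (hb : ∀ i, 0 ≤ b i) (hc : ∀ i, 0 < c i)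
    (hsum : 1 < ∑ i, (a i ^ 2 + b i ^ 2) / c i
        - ∑ i, ∑ j, if i = j then 0 else (a i * b j - a j * b i) ^ 2 / (c i * c j))
    (hD : (Matrix.vecMulVec a a + Matrix.vecMulVec b b - Matrix.diagonal c).IsHermitian) :
    (Finset.univ.filter fun i => 0 < hD.eigenvalues i).card = 1 := by
  classical
  have hsplit : ∑ i, (a i ^ 2 + b i ^ 2) / c i = (∑ i, a i^2/c i) + (∑ i, b i^2/c i) := by
    rw [← Finset.sum_add_distrib]
    exact Finset.sum_congr rfl fun i _ => add_div _ _ _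
  have hid := sum_identity a b c hc
  have hs : 1 < (∑ i, a i^2/c i) + (∑ i, b i^2/c i)
      - 2*((∑ i, a i^2/c i)*(∑ i, b i^2/c i) - (∑ i, a i*b i/c i)^2) := by
    rw [hsplit, hid] at hsum; linarith
  have hp : 0 ≤ (∑ i, a i^2/c i)*(∑ i, b i^2/c i) - (∑ i, a i*b i/c i)^2 := by
    have h0 : 0 ≤ ∑ i, ∑ j, (if i = j then 0 else (a i * b j - a j * b i) ^ 2 / (c i * c j)) :=
      Finset.sum_nonneg fun i _ => Finset.sum_nonneg fun j _ => by
        split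
        · exact le_refl _
        · exact div_nonneg (sq_nonneg _) (mul_nonneg (hc _).le (hc _).le)
    rw [hid] at h0; linarith
  -- existence of a positive eigenvalue
  obtain ⟨α, β, hw⟩ := witness_exists (∑ i, a i^2/c i) (∑ i, b i^2/c i) (∑ i, a i*b i/c i) hp hs
  set x : Fin d → ℝ := fun i => α * (a i / c i) + β * (b i / c i) with hxdef
  have hax : a ⬝ᵥ x = α*(∑ i, a i^2/c i) + β*(∑ i, a i*b i/c i) := by
    simp only [dotProduct, hxdef]
    rw [Finset.sum_congr rfl (fun i (_ : i ∈ univ) => by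
      have := (hc i).ne'; field_simp :
      ∀ i ∈ univ, a i * (α * (a i / c i) + β * (b i / c i))
        = α * (a i^2/c i) + β * (a i * b i/c i))]
    rw [Finset.sum_add_distrib, ← Finset.mul_sum, ← Finset.mul_sum]
  have hbx : b ⬝ᵥ x = α*(∑ i, a i*b i/c i) + β*(∑ i, b i^2/c i) := by
    simp only [dotProduct, hxdef]
    rw [Finset.sum_congr rfl (fun i (_ : i ∈ univ) => by
      have := (hc i).ne'; field_simp :
      ∀ i ∈ univ, b i * (α * (a i / c i) + β * (b i / c i))
        = α * (a i * b i/c i) + β * (b i^2/c i))]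
    rw [Finset.sum_add_distrib, ← Finset.mul_sum, ← Finset.mul_sum]
  have hcx : ∑ i, c i * x i^2 = α^2*(∑ i, a i^2/c i) + 2*α*β*(∑ i, a i*b i/c i)
      + β^2*(∑ i, b i^2/c i) := by
    simp only [hxdef]
    rw [Finset.sum_congr rfl (fun i (_ : i ∈ univ) => by
      have := (hc i).ne'; field_simp; ring :
      ∀ i ∈ univ, c i * (α * (a i / c i) + β * (b i / c i))^2
        = α^2 * (a i^2/c i) + 2*α*β*(a i * b i/c i) + β^2 * (b i^2/c i))]
    rw [Finset.sum_add_distrib, Finset.sum_add_distrib, ← Finset.mul_sum, ← Finset.mul_sum,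
      ← Finset.mul_sum]
  have hQx : 0 < x ⬝ᵥ (Matrix.vecMulVec a a + Matrix.vecMulVec b b - Matrix.diagonal c) *ᵥ x := by
    rw [quad_eq a b c x, hax, hbx, hcx]
    linarith
  have hex : ∃ k, 0 < hD.eigenvalues k := by
    by_contra hno
    push_neg at hno
    rw [quad_expansion _ hD x] at hQx
    have hle : (∑ k, hD.eigenvalues k * ((hD.eigenvectorBasis k : Fin d → ℝ) ⬝ᵥ x)^2) ≤ 0 :=
      Finset.sum_nonpos fun k _ => mul_nonpos_iff.mpr (Or.inr ⟨hno k, sq_nonneg _⟩)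
    linarith
  obtain ⟨i0, hi0⟩ := hex
  -- uniqueness
  have huniq : ∀ p q : Fin d, p ≠ q → 0 < hD.eigenvalues p → 0 < hD.eigenvalues q → False := by
    intro p q hpq hlp hlq
    set u1 : Fin d → ℝ := (hD.eigenvectorBasis p : Fin d → ℝ) with hu1
    set u2 : Fin d → ℝ := (hD.eigenvectorBasis q : Fin d → ℝ) with hu2
    have horth : ∀ s t : Fin d, (hD.eigenvectorBasis s : Fin d → ℝ) ⬝ᵥ (hD.eigenvectorBasis t : Fin d → ℝ) = if s = t then 1 else 0 := by
      intro s t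
      have := orthonormal_iff_ite.mp hD.eigenvectorBasis.orthonormal s t
      rw [real_inner_comm] at this
      simpa [PiLp.inner_apply, dotProduct] using this
    have h11 : u1 ⬝ᵥ u1 = 1 := by rw [hu1, horth, if_pos rfl]
    have h12 : u1 ⬝ᵥ u2 = 0 := by rw [hu1, hu2, horth, if_neg hpq]
    have h21 : u2 ⬝ᵥ u1 = 0 := by rw [hu1, hu2, horth, if_neg (Ne.symm hpq)]
    have h22 : u2 ⬝ᵥ u2 = 1 := by rw [hu2, horth, if_pos rfl]
    have hQw : ∀ σ τ : ℝ, (σ • u1 + τ • u2) ⬝ᵥ (Matrix.vecMulVec a a + Matrix.vecMulVec b b - Matrix.diagonal c) *ᵥ (σ • u1 + τ • u2)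
        = hD.eigenvalues p * σ^2 + hD.eigenvalues q * τ^2 := by
      intro σ τ
      have hmv1 : (Matrix.vecMulVec a a + Matrix.vecMulVec b b - Matrix.diagonal c) *ᵥ u1
          = hD.eigenvalues p • u1 := hD.mulVec_eigenvectorBasis p
      have hmv2 : (Matrix.vecMulVec a a + Matrix.vecMulVec b b - Matrix.diagonal c) *ᵥ u2
          = hD.eigenvalues q • u2 := hD.mulVec_eigenvectorBasis q
      rw [Matrix.mulVec_add, Matrix.mulVec_smul, Matrix.mulVec_smul, hmv1, hmv2]
      simp only [add_dotProduct, dotProduct_add, smul_dotProduct,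
        dotProduct_smul, smul_eq_mul, smul_smul, h11, h12, h21, h22]
      ring
    have hKey : ∀ σ τ : ℝ, (a ⬝ᵥ (σ • u1 + τ • u2))^2 + (b ⬝ᵥ (σ • u1 + τ • u2))^2
        - ∑ k, c k * (σ • u1 + τ • u2) k^2
        = hD.eigenvalues p * σ^2 + hD.eigenvalues q * τ^2 := by
      intro σ τ
      rw [← quad_eq a b c (σ • u1 + τ • u2)]
      exact hQw σ τ
    have hdota : ∀ (w : Fin d → ℝ) (σ τ : ℝ), w ⬝ᵥ (σ • u1 + τ • u2)
        = σ * (w ⬝ᵥ u1) + τ * (w ⬝ᵥ u2) := by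
      intro w σ τ
      rw [dotProduct_add, dotProduct_smul, dotProduct_smul]
      simp [smul_eq_mul]
    set α1 := a ⬝ᵥ u1 with hα1
    set α2 := a ⬝ᵥ u2 with hα2
    set β1 := b ⬝ᵥ u1 with hβ1
    set β2 := b ⬝ᵥ u2 with hβ2
    have hSnn : ∀ σ τ : ℝ, 0 ≤ ∑ k, c k * (σ • u1 + τ • u2) k ^2 := fun σ τ =>
      Finset.sum_nonneg fun k _ => mul_nonneg (hc k).le (sq_nonneg _)
    have hposRHS : ∀ σ τ : ℝ, (σ ≠ 0 ∨ τ ≠ 0)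
        → 0 < hD.eigenvalues p * σ^2 + hD.eigenvalues q * τ^2 := by
      intro σ τ h
      rcases h with h | h
      · nlinarith [mul_pos hlp (pow_pos (abs_pos.mpr h) 2), sq_abs σ,
          mul_nonneg hlq.le (sq_nonneg τ)]
      · nlinarith [mul_pos hlq (pow_pos (abs_pos.mpr h) 2), sq_abs τ,
          mul_nonneg hlp.le (sq_nonneg σ)]
    have hΔ : α1*β2 - α2*β1 ≠ 0 := by
      intro hΔ0
      have hcontra : ∀ σ τ : ℝ, σ*α1 + τ*α2 = 0 → σ*β1 + τ*β2 = 0 → (σ ≠ 0 ∨ τ ≠ 0) → False := by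
        intro σ τ hA0 hB0 hne
        have h := hKey σ τ
        rw [hdota a σ τ, hdota b σ τ, ← hα1, ← hα2, ← hβ1, ← hβ2, hA0, hB0] at h
        have := hposRHS σ τ hne
        have := hSnn σ τ
        nlinarith
      by_cases hα : α1 = 0 ∧ α2 = 0
      · by_cases hβ : β1 = 0 ∧ β2 = 0
        · exact hcontra 1 0 (by rw [hα.1, hα.2]; ring) (by rw [hβ.1, hβ.2]; ring)
            (Or.inl one_ne_zero)
        · have hne : β2 ≠ 0 ∨ -β1 ≠ 0 := by
            rcases not_and_or.mp hβ with h | h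
            · right; simpa using h
            · left; exact h
          exact hcontra β2 (-β1) (by rw [hα.1, hα.2]; ring) (by ring) hne
      · have hne : α2 ≠ 0 ∨ -α1 ≠ 0 := by
          rcases not_and_or.mp hα with h | h
          · right; simpa using h
          · left; exact h
        exact hcontra α2 (-α1) (by ring) (by linear_combination -hΔ0) hne
    have hBpos : 0 < ∑ i, b i^2/c i := by
      have hnn : ∀ i ∈ univ, (0:ℝ) ≤ b i^2/c i := fun i _ => div_nonneg (sq_nonneg _) (hc i).le
      rcases (Finset.sum_nonneg hnn).eq_or_lt with h0 | h0
      · exfalso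
        have hz : ∀ i ∈ univ, b i^2/c i = 0 :=
          (Finset.sum_eq_zero_iff_of_nonneg hnn).mp h0.symm
        have hb0 : ∀ i, b i = 0 := by
          intro i
          have := hz i (mem_univ i)
          have hci := (hc i).ne'
          have : b i ^ 2 = 0 := by
            rcases div_eq_zero_iff.mp this with h | h
            · exact h
            · exact absurd h hci
          exact pow_eq_zero_iff (by norm_num) |>.mp this
        have hβ10 : β1 = 0 := by
          rw [hβ1, dotProduct]
          exact Finset.sum_eq_zero fun k _ => by rw [hb0 k]; ring
        have hβ20 : β2 = 0 := by
          rw [hβ2, dotProduct]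
          exact Finset.sum_eq_zero fun k _ => by rw [hb0 k]; ring
        rw [hβ10, hβ20] at hΔ
        simp at hΔ
      · exact h0
    have hApos : 0 < ∑ i, a i^2/c i :=
      Finset.sum_pos (fun i _ => div_pos (pow_pos (ha i) 2) (hc i)) ⟨p, mem_univ p⟩
    have main : ∀ σ τ : ℝ, (σ*α1+τ*α2)^2 + (σ*β1+τ*β2)^2 = 1
        → ∑ k, c k * (σ • u1 + τ • u2) k^2 ≤ 1 := by
      intro σ τ h1
      have h := hKey σ τ
      rw [hdota a σ τ, hdota b σ τ, ← hα1, ← hα2, ← hβ1, ← hβ2] at h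
      have h2 : 0 ≤ hD.eigenvalues p * σ^2 + hD.eigenvalues q * τ^2 :=
        add_nonneg (mul_nonneg hlp.le (sq_nonneg _)) (mul_nonneg hlq.le (sq_nonneg _))
      linarith
    set Δ := α1*β2 - α2*β1 with hΔdef
    have haxx : (β2/Δ)*α1 + (-β1/Δ)*α2 = 1 := by
      rw [div_mul_eq_mul_div, div_mul_eq_mul_div, ← add_div, div_eq_one_iff_eq hΔ, hΔdef]; ring
    have hbxx : (β2/Δ)*β1 + (-β1/Δ)*β2 = 0 := by
      rw [hΔdef]; field_simp; ring
    have hayy : (-α2/Δ)*α1 + (α1/Δ)*α2 = 0 := by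
      rw [hΔdef]; field_simp; ring
    have hbyy : (-α2/Δ)*β1 + (α1/Δ)*β2 = 1 := by
      rw [div_mul_eq_mul_div, div_mul_eq_mul_div, ← add_div, div_eq_one_iff_eq hΔ, hΔdef]; ring
    have hkB := key_step a b c ((β2/Δ) • u1 + (-β1/Δ) • u2) hc hBpos
      (by rw [hdota a, ← hα1, ← hα2]; exact haxx)
      (by rw [hdota b, ← hβ1, ← hβ2]; exact hbxx)
      (main _ _ (by rw [haxx, hbxx]; norm_num))
    have hkA := key_step b a c ((-α2/Δ) • u1 + (α1/Δ) • u2) hc hApos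
      (by rw [hdota b, ← hβ1, ← hβ2]; exact hbyy)
      (by rw [hdota a, ← hα1, ← hα2]; exact hayy)
      (main _ _ (by rw [hayy, hbyy]; norm_num))
    have hTsym : (∑ i, b i * a i / c i) = ∑ i, a i * b i / c i :=
      Finset.sum_congr rfl fun i _ => by rw [mul_comm (b i) (a i)]
    rw [hTsym] at hkA
    have hcomm : (∑ i, b i^2/c i)*(∑ i, a i^2/c i) = (∑ i, a i^2/c i)*(∑ i, b i^2/c i) :=
      mul_comm _ _
    linarith
  rw [Finset.card_eq_one]
  refine ⟨i0, Finset.ext fun k => ?_⟩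
  simp only [Finset.mem_filter, Finset.mem_univ, true_and, Finset.mem_singleton]
  constructor
  · intro hk
    by_contra hne
    exact huniq k i0 hne hk hi0
  · intro h
    rw [h]; exact hi0
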